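/- arXiv:1602.08365 — 2 statements merged into one kernel-verified Lean document; each statement's English description precedes it below -/
import Mathlib

section
/- The iterated Boolean sum 𝐁_{𝐦,𝐧} := ( ⋯ ((𝐏_{m_0}𝐐_{n_r}) ⊕ (𝐏_{m_1}𝐐_{n_{r−1}})) ⊕ ⋯ ) ⊕ (𝐏_{m_r}𝐐_{n_0}), where A ⊕ B := A + B − AB, is a linear projector of C([a,b]×[c,d]) onto the space of restrictions to [a,b]×[c,d] of polynomials in S_{𝐦,𝐧} = Σ_{k=0}^r Π_{m_k}⊗Π_{n_{r−k}}: it is linear, idempotent, and its range is exactly S_{𝐦,𝐧}. -/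
open scoped BigOperators

noncomputable section

/-- Sup norm `‖f‖_{∞,S}` of a function over a set `S`. -/
def supN {α : Type*} (S : Set α) (f : α → ℝ) : ℝ := ⨆ z : S, |f z.1|

/-- Operator norm of `L` over continuous functions on `R` with sup norm `≤ 1`. -/
def opN {α : Type*} [TopologicalSpace α] (R : Set α) (L : (α → ℝ) → α → ℝ) : ℝ :=
  ⨆ G : {G : α → ℝ // ContinuousOn G R ∧ supN R G ≤ 1}, supN R (L G.1)

/-- Bernstein basis function `B_i^m` scaled to `[a,b]`. -/
def bern (m : ℕ) (a b : ℝ) (i : ℕ) : ℝ → ℝ := fun x =>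
  (m.choose i : ℝ) * ((b - x) / (b - a)) ^ (m - i) * ((x - a) / (b - a)) ^ i

/-- Uniform node `x_i^m = a + (i/m)(b-a)`. -/
def node (m : ℕ) (a b : ℝ) (i : ℕ) : ℝ := a + (i : ℝ) / (m : ℝ) * (b - a)

/-- Bernstein collocation matrix `T_m = (B_j^m(x_i^m))_{ij}`. -/
def Tmat (m : ℕ) (a b : ℝ) : Matrix (Fin (m + 1)) (Fin (m + 1)) ℝ := fun i j =>
  bern m a b j (node m a b i)

/-- Dual functionals `λ_j^m f = (T_m⁻¹ · (f(x_i^m))_i)_j`. -/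
def lam (m : ℕ) (a b : ℝ) (j : Fin (m + 1)) (f : ℝ → ℝ) : ℝ :=
  (Tmat m a b)⁻¹.mulVec (fun i => f (node m a b i)) j

/-- `λ_j^m` with a natural-number index (zero out of range). -/
def lamN (m : ℕ) (a b : ℝ) (j : ℕ) (f : ℝ → ℝ) : ℝ :=
  if h : j < m + 1 then lam m a b ⟨j, h⟩ f else 0

/-- The index map `α^k : i ↦ i·(m_r/m_k)` (when `m_k ∣ m_r` and `i ≤ m_k` the `min` is inert). -/
def alphaF (mk mr : ℕ) (i : Fin (mk + 1)) : Fin (mr + 1) :=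
  ⟨min (i.1 * (mr / mk)) mr, Nat.lt_succ_of_le (min_le_right _ _)⟩

/-- Degree elevation matrix `E_{m_k}^{m_r} = (λ_i^{m_r}(B_j^{m_k}))_{ij}`. -/
def Emat (mk mr : ℕ) (a b : ℝ) : Matrix (Fin (mr + 1)) (Fin (mk + 1)) ℝ := fun i j =>
  lam mr a b i (bern mk a b j)

/-- Row submatrix `E_{m_k}^{m_r}(α^k,:)`. -/
def Esub (mk mr : ℕ) (a b : ℝ) : Matrix (Fin (mk + 1)) (Fin (mk + 1)) ℝ := fun i j =>
  Emat mk mr a b (alphaF mk mr i) j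

/-- Dual basis polynomials `D_j^{m_k} = Σ_ℓ (E(α^k,:)⁻¹)_{ℓ j} B_ℓ^{m_k}`. -/
def Dq (mk mr : ℕ) (a b : ℝ) (j : Fin (mk + 1)) : ℝ → ℝ := fun x =>
  ∑ l : Fin (mk + 1), (Esub mk mr a b)⁻¹ l j * bern mk a b l x

/-- `D_j^{m_k}` with a natural-number index (zero out of range). -/
def DqN (mk mr : ℕ) (a b : ℝ) (j : ℕ) : ℝ → ℝ :=
  if h : j < mk + 1 then Dq mk mr a b ⟨j, h⟩ else 0

/-- Functionals `μ_i^{m_k} = λ_{α^k_i}^{m_r}`. -/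
def mu (mk mr : ℕ) (a b : ℝ) (i : Fin (mk + 1)) (f : ℝ → ℝ) : ℝ :=
  lam mr a b (alphaF mk mr i) f

/-- Univariate quasi-interpolant `P_{m_k} f = Σ_i (μ_i^{m_k} f)·D_i^{m_k}`. -/
def Pop (mk mr : ℕ) (a b : ℝ) (f : ℝ → ℝ) : ℝ → ℝ := fun x =>
  ∑ i : Fin (mk + 1), mu mk mr a b i f * Dq mk mr a b i x

/-- Bivariate extension `𝐏_{m_k} = P_{m_k} × I` (acting in the first variable). -/
def PP (mk mr : ℕ) (a b : ℝ) (F : ℝ × ℝ → ℝ) : ℝ × ℝ → ℝ := fun z =>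
  Pop mk mr a b (fun x => F (x, z.2)) z.1

/-- Bivariate extension `𝐐_{n_ℓ} = I × Q_{n_ℓ}` (acting in the second variable). -/
def QQ (nl nr : ℕ) (c d : ℝ) (F : ℝ × ℝ → ℝ) : ℝ × ℝ → ℝ := fun z =>
  Pop nl nr c d (fun y => F (z.1, y)) z.2

/-- Maximum absolute row sum matrix norm. -/
def rowNorm {p q : ℕ} (A : Matrix (Fin p) (Fin q) ℝ) : ℝ := ⨆ i : Fin p, ∑ j, |A i j|

/-- `C_{m_r} = max_i sup{ |λ_i^{m_r} f| : f ∈ C[a,b], ‖f‖_∞ ≤ 1 }`. -/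
def Cbase (mr : ℕ) (a b : ℝ) : ℝ :=
  ⨆ i : Fin (mr + 1),
    ⨆ f : {f : ℝ → ℝ // ContinuousOn f (Set.Icc a b) ∧ supN (Set.Icc a b) f ≤ 1},
      |lam mr a b i f.1|

/-- `C_{m_r,m_k} = C_{m_r}·(m_k+1)·‖E_{m_k}^{m_r}(α^k,:)⁻¹‖_∞`. -/
def Cconst (mk mr : ℕ) (a b : ℝ) : ℝ :=
  Cbase mr a b * ((mk : ℝ) + 1) * rowNorm (Esub mk mr a b)⁻¹

/-- `Π_m`: univariate polynomial functions of degree at most `m`. -/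
def polyF (m : ℕ) : Submodule ℝ (ℝ → ℝ) :=
  Submodule.span ℝ {f : ℝ → ℝ | ∃ i ≤ m, f = fun x => x ^ i}

/-- `Π_p ⊗ Π_q`: bivariate polynomial functions of degree `≤ p` in `x` and `≤ q` in `y`. -/
def polyF2 (p q : ℕ) : Submodule ℝ (ℝ × ℝ → ℝ) :=
  Submodule.span ℝ {F : ℝ × ℝ → ℝ | ∃ i ≤ p, ∃ j ≤ q, F = fun z => z.1 ^ i * z.2 ^ j}

/-- `S_{𝐦,𝐧} = Σ_{k=0}^r Π_{m_k} ⊗ Π_{n_{r-k}}` (as a space of functions). -/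
def SmnF (r : ℕ) (m n : ℕ → ℕ) : Submodule ℝ (ℝ × ℝ → ℝ) :=
  ∑ k ∈ Finset.range (r + 1), polyF2 (m k) (n (r - k))

/-- `Π_p ⊗ Π_q` inside the bivariate polynomial ring. -/
def PiTP (p q : ℕ) : Submodule ℝ (MvPolynomial (Fin 2) ℝ) :=
  Submodule.span ℝ {P | ∃ i ≤ p, ∃ j ≤ q,
    P = MvPolynomial.monomial (Finsupp.single 0 i + Finsupp.single 1 j) (1 : ℝ)}

/-- `S_{𝐦,𝐧} = Σ_{k=0}^r Π_{m_k} ⊗ Π_{n_{r-k}}` in the bivariate polynomial ring. -/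
def SmnP (r : ℕ) (m n : ℕ → ℕ) : Submodule ℝ (MvPolynomial (Fin 2) ℝ) :=
  ∑ k ∈ Finset.range (r + 1), PiTP (m k) (n (r - k))

/-- The rectangle `[a,b] × [c,d]`. -/
def Rect (a b c d : ℝ) : Set (ℝ × ℝ) := Set.Icc a b ×ˢ Set.Icc c d

/-- `Fd` is a system of mixed partial derivatives of `Fd 0 0` of class `C^{p,q}` on the
rectangle: all mixed partials `F^{(i,j)}`, `i ≤ p`, `j ≤ q`, exist and are continuous. -/
def IsCpq (p q : ℕ) (a b c d : ℝ) (Fd : ℕ → ℕ → ℝ × ℝ → ℝ) : Prop :=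
  (∀ i < p, ∀ j ≤ q, ∀ z ∈ Rect a b c d,
      HasDerivWithinAt (fun x => Fd i j (x, z.2)) (Fd (i + 1) j z) (Set.Icc a b) z.1) ∧
  (∀ i ≤ p, ∀ j < q, ∀ z ∈ Rect a b c d,
      HasDerivWithinAt (fun y => Fd i j (z.1, y)) (Fd i (j + 1) z) (Set.Icc c d) z.2) ∧
  (∀ i ≤ p, ∀ j ≤ q, ContinuousOn (Fd i j) (Rect a b c d))

end

noncomputable section

/-- Boolean sum `A ⊕ B = A + B − AB` of operators. -/
def boolS (A B : (ℝ × ℝ → ℝ) → ℝ × ℝ → ℝ) : (ℝ × ℝ → ℝ) → ℝ × ℝ → ℝ :=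
  fun F z => A F z + B F z - A (B F) z

/-- The tensor product projector `𝐏_{m_k} 𝐐_{n_{r−k}}`. -/
def tpPQ (r : ℕ) (m n : ℕ → ℕ) (a b c d : ℝ) (k : ℕ) : (ℝ × ℝ → ℝ) → ℝ × ℝ → ℝ :=
  fun F => PP (m k) (m r) a b (QQ (n (r - k)) (n r) c d F)

/-- The iterated Boolean sum `(⋯((𝐏_{m_0}𝐐_{n_r}) ⊕ (𝐏_{m_1}𝐐_{n_{r−1}})) ⊕ ⋯) ⊕ (𝐏_{m_j}𝐐_{n_{r−j}})`. -/
def Bfold (r : ℕ) (m n : ℕ → ℕ) (a b c d : ℝ) : ℕ → (ℝ × ℝ → ℝ) → ℝ × ℝ → ℝ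
  | 0 => tpPQ r m n a b c d 0
  | k + 1 => boolS (Bfold r m n a b c d k) (tpPQ r m n a b c d (k + 1))

end

/-! ### Auxiliary development -/
noncomputable section Aux
open Finset Polynomial

/-- monomial in `u = (x-a)/(b-a)` -/
def phiF (a b : ℝ) (s : ℕ) : ℝ → ℝ := fun x => ((x - a) / (b - a)) ^ s

/-- coefficient of `u^k` in `C(m,j)(1-u)^{m-j} u^j` -/
def Mco (m j k : ℕ) : ℝ :=
  if j ≤ k then (-1 : ℝ) ^ (k - j) * (m.choose j) * ((m - j).choose (k - j)) else 0

lemma one_sub_pow (n : ℕ) (u : ℝ) :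
    (1 - u) ^ n = ∑ t ∈ range (n + 1), (-1 : ℝ) ^ t * u ^ t * ((n.choose t : ℝ)) := by
  have h := add_pow (-u) 1 n
  simp only [one_pow, mul_one] at h
  rw [show (1 : ℝ) - u = -u + 1 by ring, h]
  refine Finset.sum_congr rfl fun t _ => ?_
  ring

lemma bern_expand {m j : ℕ} (hj : j ≤ m) (u : ℝ) :
    (m.choose j : ℝ) * (1 - u) ^ (m - j) * u ^ j
      = ∑ k ∈ range (m + 1), Mco m j k * u ^ k := by
  have h1 : m + 1 = j + (m - j + 1) := by omega
  rw [h1, Finset.sum_range_add]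
  have h0 : ∀ x ∈ range j, Mco m j x * u ^ x = 0 := by
    intro x hx
    rw [mem_range] at hx
    simp [Mco, Nat.not_le.mpr hx]
  rw [Finset.sum_congr rfl h0, Finset.sum_const_zero, zero_add]
  rw [one_sub_pow (m - j) u, Finset.mul_sum, Finset.sum_mul]
  refine Finset.sum_congr rfl fun t _ => ?_
  have : Mco m j (j + t) = (-1 : ℝ) ^ t * (m.choose j) * ((m - j).choose t) := by
    simp [Mco, Nat.le_add_right]
  rw [this, pow_add]
  ring

lemma sum_bern {m s : ℕ} {a b : ℝ} (hab : b - a ≠ 0) (hs : s ≤ m) (x : ℝ) :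
    ∑ j : Fin (m + 1), ((j : ℕ).choose s : ℝ) / (m.choose s : ℝ) * bern m a b j x
      = phiF a b s x := by
  set u : ℝ := (x - a) / (b - a) with hu
  have hbx : (b - x) / (b - a) = 1 - u := by
    rw [hu]; field_simp; ring
  have hb : ∀ j : ℕ, j ≤ m → bern m a b j x = (m.choose j : ℝ) * (1 - u) ^ (m - j) * u ^ j := by
    intro j _; rw [bern, hbx]
  have hcm : (0 : ℝ) < (m.choose s : ℝ) := by
    exact_mod_cast Nat.choose_pos hs
  rw [Fin.sum_univ_eq_sum_range (fun j => ((j : ℕ).choose s : ℝ) / (m.choose s : ℝ) * bern m a b j x)]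
  have key : ∑ j ∈ range (m + 1), ((j).choose s : ℝ) * bern m a b j x
      = (m.choose s : ℝ) * u ^ s := by
    have h1 : m + 1 = s + (m - s + 1) := by omega
    rw [h1, Finset.sum_range_add]
    have h0 : ∀ j ∈ range s, ((j).choose s : ℝ) * bern m a b j x = 0 := by
      intro j hj
      rw [mem_range] at hj
      rw [Nat.choose_eq_zero_of_lt hj]; simp
    rw [Finset.sum_congr rfl h0, Finset.sum_const_zero, zero_add]
    have h2 : ∀ t ∈ range (m - s + 1),
        (((s + t).choose s : ℝ)) * bern m a b (s + t) x
          = (m.choose s : ℝ) * (((m - s).choose t : ℝ) * u ^ t * (1 - u) ^ (m - s - t)) * u ^ s := by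
      intro t ht
      rw [mem_range] at ht
      have hst : s + t ≤ m := by omega
      rw [hb (s + t) hst]
      have hcc : (m.choose (s + t)) * ((s + t).choose s) = (m.choose s) * ((m - s).choose t) := by
        have := Nat.choose_mul (n := m) (k := s + t) (s := s) (Nat.le_add_right _ _)
        simpa using this
      have hcc' : ((m.choose (s + t)) : ℝ) * (((s + t).choose s) : ℝ)
          = ((m.choose s) : ℝ) * (((m - s).choose t) : ℝ) := by exact_mod_cast congrArg Nat.cast hcc
      have hsub : m - (s + t) = m - s - t := by omega
      rw [hsub, pow_add]
      linear_combination ((1 - u) ^ (m - s - t) * (u ^ s * u ^ t)) * hcc'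
    rw [Finset.sum_congr rfl h2, ← Finset.sum_mul, ← Finset.mul_sum]
    have h3 : ∑ t ∈ range (m - s + 1), ((m - s).choose t : ℝ) * u ^ t * (1 - u) ^ (m - s - t) = 1 := by
      have h := add_pow u (1 - u) (m - s)
      simp only [show u + (1 - u) = 1 by ring, one_pow] at h
      conv_rhs => rw [h]
      refine Finset.sum_congr rfl fun t _ => ?_
      ring
    rw [h3, mul_one]
  calc ∑ j ∈ range (m + 1), ((j).choose s : ℝ) / (m.choose s : ℝ) * bern m a b j x
      = (∑ j ∈ range (m + 1), ((j).choose s : ℝ) * bern m a b j x) / (m.choose s : ℝ) := by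
        rw [Finset.sum_div]; refine Finset.sum_congr rfl fun j _ => by ring
    _ = phiF a b s x := by
        rw [key, mul_comm, mul_div_assoc, div_self (ne_of_gt hcm), mul_one]
        show u ^ s = ((x - a) / (b - a)) ^ s
        rw [hu]


/-- The lower-triangular coefficient matrix of the Bernstein basis in the `u`-monomials. -/
def MmatG (m : ℕ) : Matrix (Fin (m + 1)) (Fin (m + 1)) ℝ := fun k j => Mco m (j : ℕ) (k : ℕ)

lemma MmatG_det (m : ℕ) : IsUnit (MmatG m).det := by
  have h : (MmatG m).BlockTriangular OrderDual.toDual := by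
    intro i j hij
    have : (i : ℕ) < (j : ℕ) := hij
    simp [MmatG, Mco, Nat.not_le.mpr this]
  rw [Matrix.det_of_lowerTriangular _ h]
  refine isUnit_iff_ne_zero.mpr (Finset.prod_ne_zero_iff.mpr fun k _ => ?_)
  have : MmatG m k k = ((m.choose (k : ℕ) : ℕ) : ℝ) := by
    simp [MmatG, Mco]
  rw [this]
  have hk : (k : ℕ) ≤ m := Nat.lt_succ_iff.mp k.isLt
  have : (0 : ℝ) < (m.choose (k : ℕ) : ℝ) := by exact_mod_cast Nat.choose_pos hk
  exact ne_of_gt this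

lemma node_u {m : ℕ} {a b : ℝ} (hab : b - a ≠ 0) (i : ℕ) :
    (node m a b i - a) / (b - a) = (i : ℝ) / m ∧
      (b - node m a b i) / (b - a) = 1 - (i : ℝ) / m := by
  constructor
  · rw [node]
    rw [show a + (i : ℝ) / m * (b - a) - a = (i : ℝ) / m * (b - a) by ring,
      mul_div_assoc, div_self hab, mul_one]
  · rw [node]
    rw [show b - (a + (i : ℝ) / m * (b - a)) = (1 - (i : ℝ) / m) * (b - a) by ring,
      mul_div_assoc, div_self hab, mul_one]

lemma Tmat_eq {m : ℕ} {a b : ℝ} (hab : b - a ≠ 0) :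
    Tmat m a b = Matrix.vandermonde (fun i : Fin (m + 1) => (i : ℝ) / m) * MmatG m := by
  funext i j
  rw [Matrix.mul_apply]
  have hj : (j : ℕ) ≤ m := Nat.lt_succ_iff.mp j.isLt
  have h1 : Tmat m a b i j
      = (m.choose (j : ℕ) : ℝ) * (1 - (i : ℝ) / m) ^ (m - (j : ℕ)) * ((i : ℝ) / m) ^ (j : ℕ) := by
    rw [Tmat, bern, (node_u hab i).1, (node_u hab i).2]
  rw [h1, bern_expand hj ((i : ℝ) / m),
    ← Fin.sum_univ_eq_sum_range (fun k => Mco m (j : ℕ) k * ((i : ℝ) / m) ^ k)]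
  refine Finset.sum_congr rfl fun k _ => ?_
  rw [Matrix.vandermonde_apply, MmatG]
  rw [div_pow]
  ring

lemma Tmat_det {m : ℕ} {a b : ℝ} (hm : 0 < m) (hab : b - a ≠ 0) :
    IsUnit (Tmat m a b).det := by
  rw [Tmat_eq hab, Matrix.det_mul]
  refine IsUnit.mul ?_ (MmatG_det m)
  rw [isUnit_iff_ne_zero, Matrix.det_vandermonde_ne_zero_iff]
  intro i j hij
  have hm' : (m : ℝ) ≠ 0 := by positivity
  have : (i : ℕ) = (j : ℕ) := by
    field_simp at hij
    exact_mod_cast hij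
  exact Fin.ext this

lemma lam_add {m : ℕ} {a b : ℝ} (j : Fin (m + 1)) (f g : ℝ → ℝ) :
    lam m a b j (fun x => f x + g x) = lam m a b j f + lam m a b j g := by
  unfold lam
  have : (fun i : Fin (m + 1) => (fun x => f x + g x) (node m a b i))
      = (fun i : Fin (m + 1) => f (node m a b i)) + fun i : Fin (m + 1) => g (node m a b i) := rfl
  rw [this, Matrix.mulVec_add, Pi.add_apply]

lemma lam_smul {m : ℕ} {a b : ℝ} (j : Fin (m + 1)) (t : ℝ) (f : ℝ → ℝ) :
    lam m a b j (fun x => t * f x) = t * lam m a b j f := by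
  unfold lam
  have : (fun i : Fin (m + 1) => (fun x => t * f x) (node m a b i))
      = t • fun i : Fin (m + 1) => f (node m a b i) := rfl
  rw [this, Matrix.mulVec_smul, Pi.smul_apply, smul_eq_mul]

lemma lam_zero {m : ℕ} {a b : ℝ} (j : Fin (m + 1)) :
    lam m a b j (fun _ => 0) = 0 := by
  have := lam_smul (a := a) (b := b) j 0 (fun _ => (0 : ℝ))
  simpa using this

lemma lam_sum {m : ℕ} {a b : ℝ} (j : Fin (m + 1)) {ι : Type*} (s : Finset ι) (g : ι → ℝ → ℝ) :
    lam m a b j (fun x => ∑ i ∈ s, g i x) = ∑ i ∈ s, lam m a b j (g i) := by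
  classical
  induction s using Finset.induction_on with
  | empty => simpa using lam_zero j
  | insert i s' hni ih =>
    rw [Finset.sum_insert hni]
    have : (fun x => ∑ k ∈ insert i s', g k x) = fun x => g i x + ∑ k ∈ s', g k x := by
      funext x; rw [Finset.sum_insert hni]
    rw [this, lam_add, ih]

lemma lam_coeff {m : ℕ} {a b : ℝ} (hdet : IsUnit (Tmat m a b).det) (f : ℝ → ℝ)
    (c : Fin (m + 1) → ℝ)
    (h : ∀ i : Fin (m + 1), f (node m a b i)
        = ∑ j : Fin (m + 1), c j * bern m a b j (node m a b i)) (j : Fin (m + 1)) :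
    lam m a b j f = c j := by
  unfold lam
  have hv : (fun i : Fin (m + 1) => f (node m a b i)) = (Tmat m a b).mulVec c := by
    funext i
    rw [h i, Matrix.mulVec, dotProduct]
    exact Finset.sum_congr rfl fun k _ => by rw [Tmat]; ring
  rw [hv, Matrix.mulVec_mulVec, Matrix.nonsing_inv_mul _ hdet, Matrix.one_mulVec]

lemma lam_phi {m s : ℕ} {a b : ℝ} (hm : 0 < m) (hab : b - a ≠ 0) (hs : s ≤ m)
    (i : Fin (m + 1)) :
    lam m a b i (phiF a b s) = ((i : ℕ).choose s : ℝ) / (m.choose s : ℝ) := by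
  exact lam_coeff (Tmat_det hm hab) _ (fun j => ((j : ℕ).choose s : ℝ) / (m.choose s : ℝ))
    (fun k => (sum_bern hab hs (node m a b k)).symm) i

lemma alpha_val {mk mr : ℕ} (hdvd : mk ∣ mr) (i : Fin (mk + 1)) :
    ((alphaF mk mr i : Fin (mr + 1)) : ℕ) = (i : ℕ) * (mr / mk) := by
  have hi : (i : ℕ) ≤ mk := Nat.lt_succ_iff.mp i.isLt
  have h1 : (i : ℕ) * (mr / mk) ≤ mk * (mr / mk) := Nat.mul_le_mul_right _ hi
  have h2 : mk * (mr / mk) = mr := Nat.mul_div_cancel' hdvd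
  simp [alphaF, min_eq_left (h2 ▸ h1)]

/-- `∏_{u<s}(X-u)` -/
def pPoly (s : ℕ) : Polynomial ℝ := ∏ u ∈ range s, (Polynomial.X - Polynomial.C (u : ℝ))

lemma pPoly_monic (s : ℕ) : (pPoly s).Monic :=
  Polynomial.monic_prod_of_monic _ _ fun u _ => Polynomial.monic_X_sub_C _

lemma pPoly_natDegree (s : ℕ) : (pPoly s).natDegree = s := by
  rw [pPoly, Polynomial.natDegree_prod_of_monic _ _ fun u _ => Polynomial.monic_X_sub_C _]
  have h2 : ∀ u ∈ range s, (Polynomial.X - Polynomial.C (u : ℝ)).natDegree = 1 :=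
    fun u _ => Polynomial.natDegree_X_sub_C _
  rw [Finset.sum_congr rfl h2]
  simp

lemma pPoly_eval_nat (n s : ℕ) :
    Polynomial.eval (n : ℝ) (pPoly s) = (n.choose s : ℝ) * (s.factorial : ℝ) := by
  rw [pPoly, Polynomial.eval_prod]
  rcases lt_or_ge n s with h | h
  · rw [Nat.choose_eq_zero_of_lt h]
    rw [Finset.prod_eq_zero (Finset.mem_range.mpr h) (by simp)]
    simp
  · have hc : ∀ u ∈ range s, Polynomial.eval (n : ℝ) (Polynomial.X - Polynomial.C (u : ℝ))
        = ((n - u : ℕ) : ℝ) := by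
      intro u hu
      rw [Finset.mem_range] at hu
      have hun : u ≤ n := le_trans (le_of_lt hu) h
      rw [Nat.cast_sub hun]
      simp
    rw [Finset.prod_congr rfl hc, ← Nat.cast_prod, ← Nat.descFactorial_eq_prod_range,
      Nat.descFactorial_eq_factorial_mul_choose]
    push_cast
    ring

/-- Triangular change between `{C(t,s)/C(mr,s)}` and monomials. -/
def StM (mk mr : ℕ) : Matrix (Fin (mk + 1)) (Fin (mk + 1)) ℝ := fun k s =>
  (pPoly (s : ℕ)).coeff (k : ℕ) / (((s : ℕ).factorial : ℝ) * (mr.choose (s : ℕ) : ℝ))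

/-- The matrix `C(α_i, s)/C(mr, s)`. -/
def ChM (mk mr : ℕ) : Matrix (Fin (mk + 1)) (Fin (mk + 1)) ℝ := fun i s =>
  (((alphaF mk mr i : Fin (mr + 1)) : ℕ).choose (s : ℕ) : ℝ) / (mr.choose (s : ℕ) : ℝ)

lemma ChM_eq (mk mr : ℕ) :
    ChM mk mr
      = Matrix.vandermonde (fun i : Fin (mk + 1) => (((alphaF mk mr i : Fin (mr + 1)) : ℕ) : ℝ))
        * StM mk mr := by
  funext i s
  rw [Matrix.mul_apply, ChM]
  have hdeg : (pPoly (s : ℕ)).natDegree < mk + 1 := by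
    rw [pPoly_natDegree]; exact s.isLt
  have heval := Polynomial.eval_eq_sum_range' hdeg ((((alphaF mk mr i : Fin (mr + 1)) : ℕ)) : ℝ)
  rw [pPoly_eval_nat] at heval
  have hsum : ∑ k : Fin (mk + 1),
      Matrix.vandermonde (fun i : Fin (mk + 1) => (((alphaF mk mr i : Fin (mr + 1)) : ℕ) : ℝ)) i k
        * StM mk mr k s
      = (∑ k ∈ range (mk + 1),
          (pPoly (s : ℕ)).coeff k * ((((alphaF mk mr i : Fin (mr + 1)) : ℕ) : ℝ)) ^ k)
        / (((s : ℕ).factorial : ℝ) * (mr.choose (s : ℕ) : ℝ)) := by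
    rw [Finset.sum_div, ← Fin.sum_univ_eq_sum_range]
    refine Finset.sum_congr rfl fun k _ => ?_
    rw [Matrix.vandermonde_apply, StM]
    ring
  rw [hsum, ← heval]
  have hfs : ((s : ℕ).factorial : ℝ) ≠ 0 := by exact_mod_cast Nat.factorial_ne_zero _
  rw [mul_comm ((((alphaF mk mr i : Fin (mr + 1)) : ℕ).choose (s : ℕ) : ℝ))
    (((s : ℕ).factorial : ℝ)), mul_div_mul_left _ _ hfs]

lemma StM_det {mk mr : ℕ} (hkr : mk ≤ mr) : IsUnit (StM mk mr).det := by
  have h : (StM mk mr).BlockTriangular id := by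
    intro s k hks
    have : (k : ℕ) < (s : ℕ) := hks
    rw [StM, Polynomial.coeff_eq_zero_of_natDegree_lt (by rw [pPoly_natDegree]; exact this),
      zero_div]
  rw [Matrix.det_of_upperTriangular h]
  refine isUnit_iff_ne_zero.mpr (Finset.prod_ne_zero_iff.mpr fun s _ => ?_)
  have hs : (s : ℕ) ≤ mr := le_trans (Nat.lt_succ_iff.mp s.isLt) hkr
  have h1 : (StM mk mr) s s = 1 / (((s : ℕ).factorial : ℝ) * (mr.choose (s : ℕ) : ℝ)) := by
    rw [StM]
    have : (pPoly (s : ℕ)).coeff (s : ℕ) = 1 := by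
      have := (pPoly_monic (s : ℕ)).leadingCoeff
      rwa [Polynomial.leadingCoeff, pPoly_natDegree] at this
    rw [this]
  rw [h1]
  have h2 : (0 : ℝ) < ((s : ℕ).factorial : ℝ) := by exact_mod_cast Nat.factorial_pos _
  have h3 : (0 : ℝ) < (mr.choose (s : ℕ) : ℝ) := by exact_mod_cast Nat.choose_pos hs
  positivity

lemma ChM_det {mk mr : ℕ} (hk : 0 < mk) (hr : 0 < mr) (hdvd : mk ∣ mr) :
    IsUnit (ChM mk mr).det := by
  have hkr : mk ≤ mr := Nat.le_of_dvd hr hdvd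
  rw [ChM_eq, Matrix.det_mul]
  refine IsUnit.mul ?_ (StM_det hkr)
  rw [isUnit_iff_ne_zero, Matrix.det_vandermonde_ne_zero_iff]
  have hq : 0 < mr / mk := Nat.div_pos hkr hk
  intro i j hij
  have hij' : ((alphaF mk mr i : Fin (mr + 1)) : ℕ) = ((alphaF mk mr j : Fin (mr + 1)) : ℕ) := by
    simpa using hij
  rw [alpha_val hdvd, alpha_val hdvd] at hij'
  exact Fin.ext (Nat.eq_of_mul_eq_mul_right hq hij')

lemma bern_eq_sum_phi {mk : ℕ} {a b : ℝ} (hab : b - a ≠ 0) (j : ℕ) (hj : j ≤ mk) :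
    bern mk a b j = fun x => ∑ s ∈ range (mk + 1), Mco mk j s * phiF a b s x := by
  funext x
  have hbx : (b - x) / (b - a) = 1 - (x - a) / (b - a) := by field_simp; ring
  rw [bern, hbx, bern_expand hj]
  rfl

lemma Esub_eq {mk mr : ℕ} {a b : ℝ} (hr : 0 < mr) (hkr : mk ≤ mr) (hab : b - a ≠ 0) :
    Esub mk mr a b = ChM mk mr * MmatG mk := by
  funext i j
  have hj : (j : ℕ) ≤ mk := Nat.lt_succ_iff.mp j.isLt
  rw [Esub, Emat, Matrix.mul_apply, bern_eq_sum_phi hab _ hj]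
  have h1 : lam mr a b (alphaF mk mr i)
        (fun x => ∑ s ∈ range (mk + 1), Mco mk (j : ℕ) s * phiF a b s x)
      = ∑ s ∈ range (mk + 1), Mco mk (j : ℕ) s * lam mr a b (alphaF mk mr i) (phiF a b s) := by
    rw [lam_sum]
    exact Finset.sum_congr rfl fun s _ => lam_smul _ _ _
  rw [h1, ← Fin.sum_univ_eq_sum_range
    (fun s => Mco mk (j : ℕ) s * lam mr a b (alphaF mk mr i) (phiF a b s))]
  refine Finset.sum_congr rfl fun s _ => ?_
  rw [lam_phi hr hab (le_trans (Nat.lt_succ_iff.mp s.isLt) hkr), ChM, MmatG]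
  ring

lemma Esub_det {mk mr : ℕ} {a b : ℝ} (hk : 0 < mk) (hr : 0 < mr) (hdvd : mk ∣ mr)
    (hab : b - a ≠ 0) : IsUnit (Esub mk mr a b).det := by
  rw [Esub_eq hr (Nat.le_of_dvd hr hdvd) hab, Matrix.det_mul]
  exact IsUnit.mul (ChM_det hk hr hdvd) (MmatG_det mk)

lemma Pop_add {mk mr : ℕ} {a b : ℝ} (f g : ℝ → ℝ) :
    Pop mk mr a b (fun x => f x + g x) = fun y => Pop mk mr a b f y + Pop mk mr a b g y := by
  funext y
  rw [Pop, Pop, Pop, ← Finset.sum_add_distrib]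
  refine Finset.sum_congr rfl fun i _ => ?_
  rw [mu, mu, mu, lam_add]
  ring

lemma Pop_smul {mk mr : ℕ} {a b : ℝ} (t : ℝ) (f : ℝ → ℝ) :
    Pop mk mr a b (fun x => t * f x) = fun y => t * Pop mk mr a b f y := by
  funext y
  rw [Pop, Pop, Finset.mul_sum]
  refine Finset.sum_congr rfl fun i _ => ?_
  rw [mu, mu, lam_smul]
  ring

lemma Pop_zero {mk mr : ℕ} {a b : ℝ} :
    Pop mk mr a b (fun _ => 0) = fun _ => 0 := by
  have h := Pop_smul (mk := mk) (mr := mr) (a := a) (b := b) 0 (fun _ => (0 : ℝ))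
  simpa using h

lemma Pop_sum {mk mr : ℕ} {a b : ℝ} {ι : Type*} (s : Finset ι) (g : ι → ℝ → ℝ) :
    Pop mk mr a b (fun x => ∑ i ∈ s, g i x) = fun y => ∑ i ∈ s, Pop mk mr a b (g i) y := by
  classical
  induction s using Finset.induction_on with
  | empty => simpa using Pop_zero
  | insert i s' hni ih =>
    have h1 : (fun x => ∑ k ∈ insert i s', g k x) = fun x => g i x + ∑ k ∈ s', g k x := by
      funext x; rw [Finset.sum_insert hni]
    rw [h1, Pop_add, ih]
    funext y
    rw [Finset.sum_insert hni]

lemma Pop_phi {mk mr s : ℕ} {a b : ℝ} (hr : 0 < mr) (hab : b - a ≠ 0)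
    (hdet : IsUnit (Esub mk mr a b).det) (hs : s ≤ mk) :
    Pop mk mr a b (phiF a b s) = phiF a b s := by
  funext x
  set c : Fin (mk + 1) → ℝ := fun l => ((l : ℕ).choose s : ℝ) / (mk.choose s : ℝ) with hc
  have hphi : ∀ y : ℝ, phiF a b s y = ∑ l : Fin (mk + 1), c l * bern mk a b (l : ℕ) y :=
    fun y => (sum_bern hab hs y).symm
  have hmu : ∀ i : Fin (mk + 1),
      mu mk mr a b i (phiF a b s) = (Esub mk mr a b).mulVec c i := by
    intro i
    rw [mu]
    have heq : phiF a b s = fun y => ∑ l : Fin (mk + 1), c l * bern mk a b (l : ℕ) y :=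
      funext hphi
    rw [heq, lam_sum]
    rw [Matrix.mulVec, dotProduct]
    refine Finset.sum_congr rfl fun l _ => ?_
    rw [lam_smul, Esub, Emat]
    ring
  have hstep : ∑ i : Fin (mk + 1), mu mk mr a b i (phiF a b s) * Dq mk mr a b i x
      = ∑ l : Fin (mk + 1),
          ((Esub mk mr a b)⁻¹.mulVec ((Esub mk mr a b).mulVec c)) l * bern mk a b (l : ℕ) x := by
    have h1 : ∀ i : Fin (mk + 1), mu mk mr a b i (phiF a b s) * Dq mk mr a b i x
        = ∑ l : Fin (mk + 1),
            (Esub mk mr a b)⁻¹ l i * (Esub mk mr a b).mulVec c i * bern mk a b (l : ℕ) x := by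
      intro i
      rw [hmu i, Dq, Finset.mul_sum]
      refine Finset.sum_congr rfl fun l _ => by ring
    rw [Finset.sum_congr rfl fun i _ => h1 i, Finset.sum_comm]
    refine Finset.sum_congr rfl fun l _ => ?_
    have h2 : (Esub mk mr a b)⁻¹.mulVec ((Esub mk mr a b).mulVec c) l
        = ∑ i : Fin (mk + 1), (Esub mk mr a b)⁻¹ l i * (Esub mk mr a b).mulVec c i := rfl
    rw [h2, Finset.sum_mul]
  rw [Pop, hstep, Matrix.mulVec_mulVec, Matrix.nonsing_inv_mul _ hdet, Matrix.one_mulVec]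
  exact (hphi x).symm

lemma polyF_mem_of_poly {mdeg : ℕ} (P : Polynomial ℝ) (hP : P.natDegree ≤ mdeg) :
    (fun x : ℝ => P.eval x) ∈ polyF mdeg := by
  have h : (fun x : ℝ => P.eval x)
      = ∑ i ∈ range (mdeg + 1), P.coeff i • (fun x : ℝ => x ^ i) := by
    funext x
    rw [Finset.sum_apply]
    rw [Polynomial.eval_eq_sum_range' (lt_of_le_of_lt hP (Nat.lt_succ_self _)) x]
    exact Finset.sum_congr rfl fun i _ => rfl
  rw [h]
  exact Submodule.sum_mem _ fun i hi => Submodule.smul_mem _ _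
    (Submodule.subset_span ⟨i, Nat.lt_succ_iff.mp (Finset.mem_range.mp hi), rfl⟩)

lemma bern_mem {mk : ℕ} {a b : ℝ} (hab : b - a ≠ 0) (l : ℕ) (hl : l ≤ mk) :
    bern mk a b l ∈ polyF mk := by
  set P : Polynomial ℝ :=
    Polynomial.C ((mk.choose l : ℝ) * (((b - a) ^ mk)⁻¹))
      * (Polynomial.C b - Polynomial.X) ^ (mk - l) * (Polynomial.X - Polynomial.C a) ^ l with hP
  have hdeg : P.natDegree ≤ mk := by
    have h1 : (Polynomial.C b - Polynomial.X : Polynomial ℝ).natDegree = 1 := by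
      rw [show (Polynomial.C b - Polynomial.X : Polynomial ℝ)
          = -(Polynomial.X - Polynomial.C b) by ring, Polynomial.natDegree_neg,
        Polynomial.natDegree_X_sub_C]
    calc P.natDegree
        ≤ (Polynomial.C ((mk.choose l : ℝ) * (((b - a) ^ mk)⁻¹))
            * (Polynomial.C b - Polynomial.X) ^ (mk - l)).natDegree
          + ((Polynomial.X - Polynomial.C a) ^ l).natDegree := Polynomial.natDegree_mul_le
      _ ≤ ((Polynomial.C ((mk.choose l : ℝ) * (((b - a) ^ mk)⁻¹))).natDegree
            + ((Polynomial.C b - Polynomial.X) ^ (mk - l)).natDegree)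
          + ((Polynomial.X - Polynomial.C a) ^ l).natDegree := by
          exact Nat.add_le_add_right Polynomial.natDegree_mul_le _
      _ ≤ (0 + (mk - l) * 1) + l * 1 := by
          refine Nat.add_le_add (Nat.add_le_add ?_ ?_) ?_
          · exact le_of_eq (Polynomial.natDegree_C _)
          · exact le_trans Polynomial.natDegree_pow_le (by rw [h1])
          · exact le_trans Polynomial.natDegree_pow_le (by rw [Polynomial.natDegree_X_sub_C])
      _ ≤ mk := by omega
  have heq : bern mk a b l = fun x => P.eval x := by
    funext x
    rw [bern, hP]
    simp only [Polynomial.eval_mul, Polynomial.eval_pow, Polynomial.eval_sub,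
      Polynomial.eval_C, Polynomial.eval_X]
    rw [div_pow, div_pow, mul_assoc, div_mul_div_comm, pow_sub_mul_pow _ hl]
    field_simp
  rw [heq]
  exact polyF_mem_of_poly P hdeg

lemma Dq_mem {mk mr : ℕ} {a b : ℝ} (hab : b - a ≠ 0) (i : Fin (mk + 1)) :
    Dq mk mr a b i ∈ polyF mk := by
  have h : Dq mk mr a b i
      = ∑ l : Fin (mk + 1), (Esub mk mr a b)⁻¹ l i • bern mk a b (l : ℕ) := by
    funext x
    rw [Dq, Finset.sum_apply]
    exact Finset.sum_congr rfl fun l _ => rfl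
  rw [h]
  exact Submodule.sum_mem _ fun l _ => Submodule.smul_mem _ _
    (bern_mem hab _ (Nat.lt_succ_iff.mp l.isLt))

lemma Pop_mem {mk mr : ℕ} {a b : ℝ} (hab : b - a ≠ 0) (f : ℝ → ℝ) :
    Pop mk mr a b f ∈ polyF mk := by
  have h : Pop mk mr a b f
      = ∑ i : Fin (mk + 1), mu mk mr a b i f • Dq mk mr a b i := by
    funext x
    rw [Pop, Finset.sum_apply]
    rfl
  rw [h]
  exact Submodule.sum_mem _ fun i _ => Submodule.smul_mem _ _ (Dq_mem hab i)

lemma Pop_fix {mk mr : ℕ} {a b : ℝ} (hr : 0 < mr) (hab : b - a ≠ 0)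
    (hdet : IsUnit (Esub mk mr a b).det) (f : ℝ → ℝ) (hf : f ∈ polyF mk) :
    Pop mk mr a b f = f := by
  induction hf using Submodule.span_induction with
  | mem g hg =>
    obtain ⟨i, hi, rfl⟩ := hg
    have hrep : (fun x : ℝ => x ^ i)
        = fun x => ∑ s ∈ range (i + 1),
            ((i.choose s : ℝ) * a ^ (i - s) * (b - a) ^ s) * phiF a b s x := by
      funext x
      have hx : x = a + (b - a) * ((x - a) / (b - a)) := by field_simp; ring
      calc x ^ i = (a + (b - a) * ((x - a) / (b - a))) ^ i := by rw [← hx]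
        _ = ∑ s ∈ range (i + 1),
              ((b - a) * ((x - a) / (b - a))) ^ s * a ^ (i - s) * (i.choose s : ℝ) := by
            rw [add_comm, add_pow]
        _ = _ := by
            refine Finset.sum_congr rfl fun s _ => ?_
            rw [mul_pow, phiF]
            ring
    rw [hrep, Pop_sum]
    funext y
    refine Finset.sum_congr rfl fun s hs => ?_
    have hsk : s ≤ mk := le_trans (Nat.lt_succ_iff.mp (Finset.mem_range.mp hs)) hi
    rw [show (fun x => ((i.choose s : ℝ) * a ^ (i - s) * (b - a) ^ s) * phiF a b s x)
        = fun x => ((i.choose s : ℝ) * a ^ (i - s) * (b - a) ^ s) * phiF a b s x from rfl,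
      Pop_smul, Pop_phi hr hab hdet hsk]
  | zero =>
    have : (0 : ℝ → ℝ) = fun _ : ℝ => (0 : ℝ) := rfl
    rw [this, Pop_zero]
  | add g h _ _ hg hh =>
    have : g + h = fun x => g x + h x := rfl
    rw [this, Pop_add, hg, hh]
  | smul t g _ hg =>
    have : t • g = fun x => t * g x := rfl
    rw [this, Pop_smul, hg]

lemma PP_add {mk mr : ℕ} {a b : ℝ} (F G : ℝ × ℝ → ℝ) :
    PP mk mr a b (F + G) = PP mk mr a b F + PP mk mr a b G := by
  funext z
  have h : (fun x => (F + G) (x, z.2)) = fun x => F (x, z.2) + G (x, z.2) := rfl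
  show Pop mk mr a b (fun x => (F + G) (x, z.2)) z.1 = _
  rw [h, Pop_add]
  rfl

lemma PP_smul {mk mr : ℕ} {a b : ℝ} (t : ℝ) (F : ℝ × ℝ → ℝ) :
    PP mk mr a b (t • F) = t • PP mk mr a b F := by
  funext z
  have h : (fun x => (t • F) (x, z.2)) = fun x => t * F (x, z.2) := rfl
  show Pop mk mr a b (fun x => (t • F) (x, z.2)) z.1 = _
  rw [h, Pop_smul]
  rfl

lemma QQ_add {nl nr : ℕ} {c d : ℝ} (F G : ℝ × ℝ → ℝ) :
    QQ nl nr c d (F + G) = QQ nl nr c d F + QQ nl nr c d G := by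
  funext z
  have h : (fun y => (F + G) (z.1, y)) = fun y => F (z.1, y) + G (z.1, y) := rfl
  show Pop nl nr c d (fun y => (F + G) (z.1, y)) z.2 = _
  rw [h, Pop_add]
  rfl

lemma QQ_smul {nl nr : ℕ} {c d : ℝ} (t : ℝ) (F : ℝ × ℝ → ℝ) :
    QQ nl nr c d (t • F) = t • QQ nl nr c d F := by
  funext z
  have h : (fun y => (t • F) (z.1, y)) = fun y => t * F (z.1, y) := rfl
  show Pop nl nr c d (fun y => (t • F) (z.1, y)) z.2 = _
  rw [h, Pop_smul]
  rfl

lemma polyF2_mono {p q p' q' : ℕ} (hp : p ≤ p') (hq : q ≤ q') :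
    polyF2 p q ≤ polyF2 p' q' := by
  refine Submodule.span_mono ?_
  rintro F ⟨i, hi, j, hj, rfl⟩
  exact ⟨i, le_trans hi hp, j, le_trans hj hq, rfl⟩

lemma prodFun_mem {p q : ℕ} {f g : ℝ → ℝ} (hf : f ∈ polyF p) (hg : g ∈ polyF q) :
    (fun z : ℝ × ℝ => f z.1 * g z.2) ∈ polyF2 p q := by
  induction hf using Submodule.span_induction with
  | mem f' hf' =>
    obtain ⟨i, hi, rfl⟩ := hf'
    induction hg using Submodule.span_induction with
    | mem g' hg' =>
      obtain ⟨j, hj, rfl⟩ := hg'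
      exact Submodule.subset_span ⟨i, hi, j, hj, rfl⟩
    | zero =>
      have : (fun z : ℝ × ℝ => z.1 ^ i * (0 : ℝ → ℝ) z.2) = 0 := by
        funext z; simp
      rw [this]; exact Submodule.zero_mem _
    | add g1 g2 _ _ h1 h2 =>
      have : (fun z : ℝ × ℝ => z.1 ^ i * (g1 + g2) z.2)
          = (fun z : ℝ × ℝ => z.1 ^ i * g1 z.2) + fun z : ℝ × ℝ => z.1 ^ i * g2 z.2 := by
        funext z; show z.1 ^ i * (g1 z.2 + g2 z.2) = z.1 ^ i * g1 z.2 + z.1 ^ i * g2 z.2; ring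
      rw [this]; exact Submodule.add_mem _ h1 h2
    | smul t g1 _ h1 =>
      have : (fun z : ℝ × ℝ => z.1 ^ i * (t • g1) z.2)
          = t • fun z : ℝ × ℝ => z.1 ^ i * g1 z.2 := by
        funext z; show z.1 ^ i * (t * g1 z.2) = t * (z.1 ^ i * g1 z.2); ring
      rw [this]; exact Submodule.smul_mem _ _ h1
  | zero =>
    have : (fun z : ℝ × ℝ => (0 : ℝ → ℝ) z.1 * g z.2) = 0 := by funext z; simp
    rw [this]; exact Submodule.zero_mem _
  | add f1 f2 _ _ h1 h2 =>
    have : (fun z : ℝ × ℝ => (f1 + f2) z.1 * g z.2)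
        = (fun z : ℝ × ℝ => f1 z.1 * g z.2) + fun z : ℝ × ℝ => f2 z.1 * g z.2 := by
      funext z; show (f1 z.1 + f2 z.1) * g z.2 = f1 z.1 * g z.2 + f2 z.1 * g z.2; ring
    rw [this]; exact Submodule.add_mem _ h1 h2
  | smul t f1 _ h1 =>
    have : (fun z : ℝ × ℝ => (t • f1) z.1 * g z.2)
        = t • fun z : ℝ × ℝ => f1 z.1 * g z.2 := by
      funext z; show t * f1 z.1 * g z.2 = t * (f1 z.1 * g z.2); ring
    rw [this]; exact Submodule.smul_mem _ _ h1

lemma QQ_mem {nl nr p q' : ℕ} {c d : ℝ} (hcd : d - c ≠ 0) {F : ℝ × ℝ → ℝ}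
    (hF : F ∈ polyF2 p q') : QQ nl nr c d F ∈ polyF2 p nl := by
  induction hF using Submodule.span_induction with
  | mem F' hF' =>
    obtain ⟨i, hi, j, hj, rfl⟩ := hF'
    have h : QQ nl nr c d (fun z : ℝ × ℝ => z.1 ^ i * z.2 ^ j)
        = fun z : ℝ × ℝ => z.1 ^ i * Pop nl nr c d (fun y => y ^ j) z.2 := by
      funext z
      show Pop nl nr c d (fun y => z.1 ^ i * y ^ j) z.2 = _
      rw [Pop_smul]
    rw [h]
    exact prodFun_mem (Submodule.subset_span ⟨i, hi, rfl⟩) (Pop_mem hcd _)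
  | zero =>
    have : QQ nl nr c d 0 = 0 := by
      funext z
      show Pop nl nr c d (fun _ => 0) z.2 = 0
      rw [Pop_zero]
    rw [this]; exact Submodule.zero_mem _
  | add F1 F2 _ _ h1 h2 => rw [QQ_add]; exact Submodule.add_mem _ h1 h2
  | smul t F1 _ h1 => rw [QQ_smul]; exact Submodule.smul_mem _ _ h1

lemma PQ_mem {mk mr nl nr : ℕ} {a b c d : ℝ} (hab : b - a ≠ 0) (hcd : d - c ≠ 0)
    (F : ℝ × ℝ → ℝ) :
    PP mk mr a b (QQ nl nr c d F) ∈ polyF2 mk nl := by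
  have key : PP mk mr a b (QQ nl nr c d F)
      = ∑ j : Fin (nl + 1), fun z : ℝ × ℝ =>
          Pop mk mr a b (fun x => mu nl nr c d j (fun y => F (x, y))) z.1
            * Dq nl nr c d j z.2 := by
    funext z
    rw [Finset.sum_apply]
    show Pop mk mr a b (fun x => Pop nl nr c d (fun y => F (x, y)) z.2) z.1 = _
    have h1 : (fun x => Pop nl nr c d (fun y => F (x, y)) z.2)
        = fun x => ∑ j : Fin (nl + 1),
            mu nl nr c d j (fun y => F (x, y)) * Dq nl nr c d j z.2 := rfl
    rw [h1, Pop_sum]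
    refine Finset.sum_congr rfl fun j _ => ?_
    have h2 : (fun x => mu nl nr c d j (fun y => F (x, y)) * Dq nl nr c d j z.2)
        = fun x => Dq nl nr c d j z.2 * mu nl nr c d j (fun y => F (x, y)) := by
      funext x; ring
    rw [h2, Pop_smul]
    ring
  rw [key]
  exact Submodule.sum_mem _ fun j _ => prodFun_mem (Pop_mem hab _) (Dq_mem hcd j)

lemma PP_fix2 {mk mr p q' : ℕ} {a b : ℝ} (hr : 0 < mr) (hab : b - a ≠ 0)
    (hdet : IsUnit (Esub mk mr a b).det) (hp : p ≤ mk) {F : ℝ × ℝ → ℝ}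
    (hF : F ∈ polyF2 p q') : PP mk mr a b F = F := by
  induction hF using Submodule.span_induction with
  | mem F' hF' =>
    obtain ⟨i, hi, j, hj, rfl⟩ := hF'
    funext z
    show Pop mk mr a b (fun x => x ^ i * z.2 ^ j) z.1 = z.1 ^ i * z.2 ^ j
    have h1 : (fun x : ℝ => x ^ i * z.2 ^ j) = fun x : ℝ => z.2 ^ j * x ^ i := by
      funext x; ring
    have h2 : Pop mk mr a b (fun x : ℝ => x ^ i) = fun x : ℝ => x ^ i :=
      Pop_fix hr hab hdet _ (Submodule.subset_span ⟨i, le_trans hi hp, rfl⟩)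
    rw [h1, Pop_smul, h2]
    ring
  | zero =>
    funext z
    show Pop mk mr a b (fun _ => 0) z.1 = 0
    rw [Pop_zero]
  | add F1 F2 _ _ h1 h2 => rw [PP_add, h1, h2]
  | smul t F1 _ h1 => rw [PP_smul, h1]

lemma QQ_fix2 {nl nr p' q : ℕ} {c d : ℝ} (hr : 0 < nr) (hcd : d - c ≠ 0)
    (hdet : IsUnit (Esub nl nr c d).det) (hq : q ≤ nl) {F : ℝ × ℝ → ℝ}
    (hF : F ∈ polyF2 p' q) : QQ nl nr c d F = F := by
  induction hF using Submodule.span_induction with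
  | mem F' hF' =>
    obtain ⟨i, hi, j, hj, rfl⟩ := hF'
    funext z
    show Pop nl nr c d (fun y => z.1 ^ i * y ^ j) z.2 = z.1 ^ i * z.2 ^ j
    have h2 : Pop nl nr c d (fun y : ℝ => y ^ j) = fun y : ℝ => y ^ j :=
      Pop_fix hr hcd hdet _ (Submodule.subset_span ⟨j, le_trans hj hq, rfl⟩)
    rw [Pop_smul, h2]
  | zero =>
    funext z
    show Pop nl nr c d (fun _ => 0) z.2 = 0
    rw [Pop_zero]
  | add F1 F2 _ _ h1 h2 => rw [QQ_add, h1, h2]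
  | smul t F1 _ h1 => rw [QQ_smul, h1]

lemma seq_le {r : ℕ} {m : ℕ → ℕ} (h : ∀ k < r, m k < m (k + 1)) :
    ∀ k l, k ≤ l → l ≤ r → m k ≤ m l := by
  intro k l hkl hlr
  induction hkl with
  | refl => exact le_rfl
  | @step l' hkl' ih =>
    exact le_trans (ih (le_trans (Nat.le_succ _) hlr))
      (le_of_lt (h l' (Nat.lt_of_succ_le hlr)))

lemma seq_dvd {r : ℕ} {m : ℕ → ℕ} (h : ∀ k < r, m k ∣ m (k + 1)) :
    ∀ k l, k ≤ l → l ≤ r → m k ∣ m l := by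
  intro k l hkl hlr
  induction hkl with
  | refl => exact dvd_rfl
  | @step l' hkl' ih =>
    exact dvd_trans (ih (le_trans (Nat.le_succ _) hlr))
      (h l' (Nat.lt_of_succ_le hlr))

lemma boolS_eq (A B : (ℝ × ℝ → ℝ) → ℝ × ℝ → ℝ) (F : ℝ × ℝ → ℝ) :
    boolS A B F = A F + B F - A (B F) := rfl

lemma Bfold_succ (r : ℕ) (m n : ℕ → ℕ) (a b c d : ℝ) (j : ℕ) (F : ℝ × ℝ → ℝ) :
    Bfold r m n a b c d (j + 1) F
      = Bfold r m n a b c d j F + tpPQ r m n a b c d (j + 1) F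
        - Bfold r m n a b c d j (tpPQ r m n a b c d (j + 1) F) := rfl

lemma tpPQ_add (r : ℕ) (m n : ℕ → ℕ) (a b c d : ℝ) (k : ℕ) (F G : ℝ × ℝ → ℝ) :
    tpPQ r m n a b c d k (F + G) = tpPQ r m n a b c d k F + tpPQ r m n a b c d k G := by
  rw [tpPQ, QQ_add, PP_add]; rfl

lemma tpPQ_smul (r : ℕ) (m n : ℕ → ℕ) (a b c d : ℝ) (k : ℕ) (t : ℝ) (F : ℝ × ℝ → ℝ) :
    tpPQ r m n a b c d k (t • F) = t • tpPQ r m n a b c d k F := by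
  rw [tpPQ, QQ_smul, PP_smul]; rfl

lemma Bfold_add (r : ℕ) (m n : ℕ → ℕ) (a b c d : ℝ) :
    ∀ (j : ℕ) (F G : ℝ × ℝ → ℝ),
      Bfold r m n a b c d j (F + G) = Bfold r m n a b c d j F + Bfold r m n a b c d j G
  | 0, F, G => tpPQ_add r m n a b c d 0 F G
  | j + 1, F, G => by
    rw [Bfold_succ, Bfold_succ, Bfold_succ, Bfold_add r m n a b c d j F G,
      tpPQ_add, Bfold_add r m n a b c d j _ _]
    funext z
    simp only [Pi.add_apply, Pi.sub_apply]
    ring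

lemma Bfold_smul (r : ℕ) (m n : ℕ → ℕ) (a b c d : ℝ) :
    ∀ (j : ℕ) (t : ℝ) (F : ℝ × ℝ → ℝ),
      Bfold r m n a b c d j (t • F) = t • Bfold r m n a b c d j F
  | 0, t, F => tpPQ_smul r m n a b c d 0 t F
  | j + 1, t, F => by
    rw [Bfold_succ, Bfold_succ, Bfold_smul r m n a b c d j t F,
      tpPQ_smul, Bfold_smul r m n a b c d j t _]
    funext z
    simp only [Pi.add_apply, Pi.sub_apply, Pi.smul_apply, smul_eq_mul]
    ring

lemma Bfold_zero (r : ℕ) (m n : ℕ → ℕ) (a b c d : ℝ) (j : ℕ) :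
    Bfold r m n a b c d j 0 = 0 := by
  have h := Bfold_smul r m n a b c d j 0 0
  rw [zero_smul, zero_smul] at h
  exact h

lemma sum_submodule_le {M : Type*} [AddCommMonoid M] [Module ℝ M] {ι : Type*}
    (s : Finset ι) (V : ι → Submodule ℝ M) (C : Submodule ℝ M) (h : ∀ k ∈ s, V k ≤ C) :
    (∑ k ∈ s, V k) ≤ C := by
  classical
  induction s using Finset.induction_on with
  | empty => simp
  | insert i s' hni ih =>
    rw [Finset.sum_insert hni, Submodule.add_eq_sup]
    exact sup_le (h i (Finset.mem_insert_self _ _))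
      (ih fun k hk => h k (Finset.mem_insert_of_mem hk))

lemma Bfold_mem (r : ℕ) (m n : ℕ → ℕ) {a b c d : ℝ} (hab : b - a ≠ 0) (hcd : d - c ≠ 0) :
    ∀ (j : ℕ) (F : ℝ × ℝ → ℝ),
      Bfold r m n a b c d j F ∈ ∑ k ∈ Finset.range (j + 1), polyF2 (m k) (n (r - k))
  | 0, F => by
    rw [Finset.sum_range_one]
    exact PQ_mem hab hcd F
  | j + 1, F => by
    rw [Bfold_succ, Finset.sum_range_succ, Submodule.add_eq_sup]
    have hX := Bfold_mem r m n hab hcd j F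
    have hY : tpPQ r m n a b c d (j + 1) F ∈ polyF2 (m (j + 1)) (n (r - (j + 1))) :=
      PQ_mem hab hcd F
    have hZ := Bfold_mem r m n hab hcd j (tpPQ r m n a b c d (j + 1) F)
    exact Submodule.sub_mem _
      (Submodule.add_mem _ (Submodule.mem_sup_left hX) (Submodule.mem_sup_right hY))
      (Submodule.mem_sup_left hZ)

lemma Bfold_fix (r : ℕ) (m n : ℕ → ℕ) {a b c d : ℝ} (hab : b - a ≠ 0) (hcd : d - c ≠ 0)
    (hrm : 0 < m r) (hrn : 0 < n r)
    (hmono : ∀ k l, k ≤ l → l ≤ r → m k ≤ m l) (hnmono : ∀ k l, k ≤ l → l ≤ r → n k ≤ n l)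
    (hdetm : ∀ k, k ≤ r → IsUnit (Esub (m k) (m r) a b).det)
    (hdetn : ∀ k, k ≤ r → IsUnit (Esub (n k) (n r) c d).det) :
    ∀ (j : ℕ), j ≤ r → ∀ (k : ℕ), k ≤ j → ∀ F ∈ polyF2 (m k) (n (r - k)),
      Bfold r m n a b c d j F = F := by
  intro j
  induction j with
  | zero =>
    intro _ k hk F hF
    interval_cases k
    have h1 : QQ (n (r - 0)) (n r) c d F = F :=
      QQ_fix2 hrn hcd (hdetn (r - 0) (Nat.sub_le _ _)) le_rfl hF
    show PP (m 0) (m r) a b (QQ (n (r - 0)) (n r) c d F) = F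
    rw [h1]
    exact PP_fix2 hrm hab (hdetm 0 (Nat.zero_le _)) le_rfl hF
  | succ j ih =>
    intro hjr k hk F hF
    have hjr' : j ≤ r := le_trans (Nat.le_succ _) hjr
    rw [Bfold_succ]
    rcases Nat.lt_succ_iff_lt_or_eq.mp (Nat.lt_succ_of_le hk) with hkj | hkj
    · -- k ≤ j
      have hkj' : k ≤ j := Nat.lt_succ_iff.mp hkj
      have hBF : Bfold r m n a b c d j F = F := ih hjr' k hkj' F hF
      -- tpPQ (j+1) F = QQ F-part, in polyF2 (m k) (n (r - (j+1)))
      have hQ : QQ (n (r - (j + 1))) (n r) c d F ∈ polyF2 (m k) (n (r - (j + 1))) :=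
        QQ_mem hcd hF
      have hA : tpPQ r m n a b c d (j + 1) F = QQ (n (r - (j + 1))) (n r) c d F := by
        show PP (m (j + 1)) (m r) a b _ = _
        exact PP_fix2 hrm hab (hdetm (j + 1) hjr)
          (hmono k (j + 1) (le_trans hkj' (Nat.le_succ _)) hjr) hQ
      have hAV : tpPQ r m n a b c d (j + 1) F ∈ polyF2 (m j) (n (r - j)) := by
        rw [hA]
        exact polyF2_mono (hmono k j hkj' hjr')
          (hnmono (r - (j + 1)) (r - j) (by omega) (Nat.sub_le _ _)) hQ
      have hZ : Bfold r m n a b c d j (tpPQ r m n a b c d (j + 1) F)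
          = tpPQ r m n a b c d (j + 1) F := ih hjr' j le_rfl _ hAV
      rw [hBF, hZ, add_sub_cancel_right]
    · -- k = j + 1
      rw [hkj] at hF
      have hQF : QQ (n (r - (j + 1))) (n r) c d F = F :=
        QQ_fix2 hrn hcd (hdetn (r - (j + 1)) (Nat.sub_le _ _)) le_rfl hF
      have hA : tpPQ r m n a b c d (j + 1) F = F := by
        show PP (m (j + 1)) (m r) a b _ = F
        rw [hQF]
        exact PP_fix2 hrm hab (hdetm (j + 1) hjr) le_rfl hF
      rw [hA, add_sub_cancel_left]
/-- The iterated Boolean sum `𝐁_{𝐦,𝐧} = ⨁_{k=0}^r 𝐏_{m_k}𝐐_{n_{r−k}}` is a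
linear projector of `C([a,b]×[c,d])` onto `S_{𝐦,𝐧}`: linear, idempotent, mapping into
`S_{𝐦,𝐧}` and reproducing every element of `S_{𝐦,𝐧}`. -/
theorem stmt8 (a b c d : ℝ) (hab : a < b) (hcd : c < d) (r : ℕ) (m n : ℕ → ℕ)
    (hm0 : 0 < m 0) (hn0 : 0 < n 0)
    (hmi : ∀ k < r, m k < m (k + 1)) (hni : ∀ k < r, n k < n (k + 1))
    (hmd : ∀ k < r, m k ∣ m (k + 1)) (hnd : ∀ k < r, n k ∣ n (k + 1)) :
    (∀ F G : ℝ × ℝ → ℝ, ContinuousOn F (Rect a b c d) → ContinuousOn G (Rect a b c d) →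
        Bfold r m n a b c d r (F + G) =
          Bfold r m n a b c d r F + Bfold r m n a b c d r G) ∧
    (∀ (t : ℝ) (F : ℝ × ℝ → ℝ), ContinuousOn F (Rect a b c d) →
        Bfold r m n a b c d r (t • F) = t • Bfold r m n a b c d r F) ∧
    (∀ F : ℝ × ℝ → ℝ, ContinuousOn F (Rect a b c d) →
        Bfold r m n a b c d r (Bfold r m n a b c d r F) = Bfold r m n a b c d r F) ∧
    (∀ F : ℝ × ℝ → ℝ, ContinuousOn F (Rect a b c d) →
        Bfold r m n a b c d r F ∈ SmnF r m n) ∧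
    (∀ p : ℝ × ℝ → ℝ, p ∈ SmnF r m n → Bfold r m n a b c d r p = p) := by
  have hab' : b - a ≠ 0 := ne_of_gt (sub_pos.mpr hab)
  have hcd' : d - c ≠ 0 := ne_of_gt (sub_pos.mpr hcd)
  have hmono : ∀ k l, k ≤ l → l ≤ r → m k ≤ m l := seq_le hmi
  have hnmono : ∀ k l, k ≤ l → l ≤ r → n k ≤ n l := seq_le hni
  have hmpos : ∀ k, k ≤ r → 0 < m k := fun k hk => lt_of_lt_of_le hm0 (hmono 0 k (Nat.zero_le _) hk)
  have hnpos : ∀ k, k ≤ r → 0 < n k := fun k hk => lt_of_lt_of_le hn0 (hnmono 0 k (Nat.zero_le _) hk)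
  have hrm : 0 < m r := hmpos r le_rfl
  have hrn : 0 < n r := hnpos r le_rfl
  have hdetm : ∀ k, k ≤ r → IsUnit (Esub (m k) (m r) a b).det := fun k hk =>
    Esub_det (hmpos k hk) hrm (seq_dvd hmd k r hk le_rfl) hab'
  have hdetn : ∀ k, k ≤ r → IsUnit (Esub (n k) (n r) c d).det := fun k hk =>
    Esub_det (hnpos k hk) hrn (seq_dvd hnd k r hk le_rfl) hcd'
  have hfix : ∀ p : ℝ × ℝ → ℝ, p ∈ SmnF r m n → Bfold r m n a b c d r p = p := by
    have hC : SmnF r m n ≤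
        { carrier := {p : ℝ × ℝ → ℝ | Bfold r m n a b c d r p = p}
          add_mem' := by
            intro p q hp hq
            rw [Set.mem_setOf_eq, Bfold_add, hp, hq]
          zero_mem' := Bfold_zero r m n a b c d r
          smul_mem' := by
            intro t p hp
            rw [Set.mem_setOf_eq, Bfold_smul]
            rw [Set.mem_setOf_eq] at hp
            rw [hp] } := by
      refine sum_submodule_le _ _ _ fun k hk => ?_
      intro F hF
      exact Bfold_fix r m n hab' hcd' hrm hrn hmono hnmono hdetm hdetn r le_rfl k
        (Finset.mem_range_succ_iff.mp hk) F hF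
    exact fun p hp => hC hp
  have hmem : ∀ F : ℝ × ℝ → ℝ, Bfold r m n a b c d r F ∈ SmnF r m n := fun F =>
    Bfold_mem r m n hab' hcd' r F
  exact ⟨fun F G _ _ => Bfold_add r m n a b c d r F G,
    fun t F _ => Bfold_smul r m n a b c d r t F,
    fun F _ => hfix _ (hmem F),
    fun F _ => hmem F,
    hfix⟩
end Aux
end

section
/- For all 0 ≤ k, ℓ ≤ r and every F ∈ C([a,b]×[c,d]), the Boolean sum 𝐏_{m_k} ⊕ 𝐐_{n_ℓ} := 𝐏_{m_k} + 𝐐_{n_ℓ} − 𝐏_{m_k}𝐐_{n_ℓ} satisfies ‖(𝐏_{m_k} ⊕ 𝐐_{n_ℓ})F‖_{∞,[a,b]×[c,d]} ≤ (C_{m_r,m_k} + C_{n_r,n_ℓ} + C_{m_r,m_k}·C_{n_r,n_ℓ})·‖F‖_{∞,[a,b]×[c,d]}, where C_{m_r,m_k} := C_{m_r}·(m_k+1)·‖E_{m_k}^{m_r}(α^k,:)^{−1}‖_∞ and C_{n_r,n_ℓ} := C_{n_r}·(n_ℓ+1)·‖E_{n_ℓ}^{n_r}(β^ℓ,:)^{−1}‖_∞,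 with C_{m_r} := max_{0≤i≤m_r} sup{|λ_i^{m_r}f| : ‖f‖_{∞,[a,b]} ≤ 1}, C_{n_r} analogous on [c,d], E_{m_k}^{m_r} the degree elevation matrix (λ_i^{m_r}(B_j^{m_k}))_{ij} with invertible row-submatrix indexed by α^k, and ‖·‖_∞ the maximum absolute row sum matrix norm. -/
open scoped BigOperators

section helper2
variable {a b : ℝ}

variable {a b : ℝ}

lemma node_mem (hab : a ≤ b) {m i : ℕ} (hi : i ≤ m) : node m a b i ∈ Set.Icc a b := by
  have hba : (0:ℝ) ≤ b - a := sub_nonneg.2 hab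
  rcases Nat.eq_zero_or_pos m with hm | hm
  · subst hm; interval_cases i; simp [node, Set.mem_Icc, hab]
  · have hmpos : (0:ℝ) < m := by exact_mod_cast hm
    have h0 : (0:ℝ) ≤ (i:ℝ)/(m:ℝ) := by positivity
    have h1 : (i:ℝ)/(m:ℝ) ≤ 1 := by
      rw [div_le_one hmpos]; exact_mod_cast hi
    simp only [node, Set.mem_Icc]
    constructor
    · nlinarith
    · nlinarith

lemma bern_mem_s11 (hab : a < b) {m i : ℕ} (hi : i ≤ m) {x : ℝ} (hx : x ∈ Set.Icc a b) :
    bern m a b i x ∈ Set.Icc (0:ℝ) 1 := by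
  have hba : (0:ℝ) < b - a := sub_pos.2 hab
  set t : ℝ := (x - a) / (b - a) with ht
  set u : ℝ := (b - x) / (b - a) with hu
  have ht0 : 0 ≤ t := div_nonneg (sub_nonneg.2 hx.1) hba.le
  have hu0 : 0 ≤ u := div_nonneg (sub_nonneg.2 hx.2) hba.le
  have htu : t + u = 1 := by
    rw [ht, hu, ← add_div, show x - a + (b - x) = b - a by ring]
    exact div_self hba.ne'
  have hsum : ∑ k ∈ Finset.range (m+1), t ^ k * u ^ (m - k) * (m.choose k : ℝ) = 1 := by
    have := add_pow t u m
    rw [htu, one_pow] at this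
    exact this.symm
  have hterm : ∀ k ∈ Finset.range (m+1), (0:ℝ) ≤ t ^ k * u ^ (m - k) * (m.choose k : ℝ) := by
    intro k _; positivity
  have hb : bern m a b i x = t ^ i * u ^ (m - i) * (m.choose i : ℝ) := by
    simp only [bern, ← ht, ← hu]; ring
  constructor
  · rw [hb]; positivity
  · rw [hb, ← hsum]
    exact Finset.single_le_sum hterm (Finset.mem_range.2 (Nat.lt_succ_of_le hi))

lemma abs_le_supN_of_bdd {α : Type*} {S : Set α} {f : α → ℝ} {C : ℝ}
    (hb : ∀ x ∈ S, |f x| ≤ C) {x : α} (hx : x ∈ S) : |f x| ≤ supN S f :=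
  le_ciSup (f := fun z : S => |f z.1|) ⟨C, by rintro _ ⟨z, rfl⟩; exact hb z.1 z.2⟩ ⟨x, hx⟩



lemma lam_raw (hab : a ≤ b) {m : ℕ} (i : Fin (m+1)) {f : ℝ → ℝ} {M : ℝ}
    (hf : ∀ x ∈ Set.Icc a b, |f x| ≤ M) :
    |lam m a b i f| ≤ (∑ j, |(Tmat m a b)⁻¹ i j|) * M := by
  simp only [lam, Matrix.mulVec, dotProduct]
  calc |∑ j, (Tmat m a b)⁻¹ i j * f (node m a b j)|
      ≤ ∑ j, |(Tmat m a b)⁻¹ i j * f (node m a b j)| := Finset.abs_sum_le_sum_abs _ _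
    _ ≤ ∑ j : Fin (m+1), |(Tmat m a b)⁻¹ i j| * M := by
        refine Finset.sum_le_sum fun j _ => ?_
        rw [abs_mul]
        exact mul_le_mul_of_nonneg_left
          (hf _ (node_mem hab (Nat.lt_succ_iff.mp j.2))) (abs_nonneg _)
    _ = _ := by rw [← Finset.sum_mul]

lemma Cbase_nonneg (m : ℕ) (a b : ℝ) : 0 ≤ Cbase m a b :=
  Real.iSup_nonneg fun _ => Real.iSup_nonneg fun _ => abs_nonneg _

lemma rowNorm_nonneg {p q : ℕ} (A : Matrix (Fin p) (Fin q) ℝ) : 0 ≤ rowNorm A := by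
  rcases Nat.eq_zero_or_pos p with hp | hp
  · subst hp; simp [rowNorm, Real.iSup_nonneg]
  · exact Real.iSup_nonneg fun i => Finset.sum_nonneg fun j _ => abs_nonneg _

lemma Cconst_nonneg (mk mr : ℕ) (a b : ℝ) : 0 ≤ Cconst mk mr a b :=
  mul_nonneg (mul_nonneg (Cbase_nonneg _ _ _) (by positivity)) (rowNorm_nonneg _)

lemma abs_lam_le_Cbase (hab : a < b) {m : ℕ} (i : Fin (m+1)) {f : ℝ → ℝ} {M : ℝ}
    (hfc : ContinuousOn f (Set.Icc a b)) (hf : ∀ x ∈ Set.Icc a b, |f x| ≤ M) :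
    |lam m a b i f| ≤ Cbase m a b * M := by
  have hM : 0 ≤ M := (abs_nonneg (f a)).trans (hf a ⟨le_refl a, hab.le⟩)
  rcases eq_or_lt_of_le hM with hM0 | hMpos
  · have hz : lam m a b i f = 0 := by
      simp only [lam, Matrix.mulVec, dotProduct]
      refine Finset.sum_eq_zero fun j _ => ?_
      have h := hf _ (node_mem hab.le (Nat.lt_succ_iff.mp j.2))
      rw [← hM0] at h
      rw [abs_nonpos_iff.mp h, mul_zero]
    rw [hz, ← hM0, abs_zero, mul_zero]
  · set g : ℝ → ℝ := fun x => M⁻¹ * f x with hg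
    have hgc : ContinuousOn g (Set.Icc a b) := continuousOn_const.mul hfc
    have hg1 : supN (Set.Icc a b) g ≤ 1 := by
      refine Real.iSup_le (fun z => ?_) zero_le_one
      have := hf z.1 z.2
      calc |g z.1| = M⁻¹ * |f z.1| := by
            rw [hg]; rw [abs_mul, abs_of_pos (inv_pos.2 hMpos)]
        _ ≤ M⁻¹ * M := by gcongr
        _ = 1 := inv_mul_cancel₀ hMpos.ne'
    have hbdd : ∀ (f₀ : {f : ℝ → ℝ // ContinuousOn f (Set.Icc a b) ∧ supN (Set.Icc a b) f ≤ 1}),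
        |lam m a b i f₀.1| ≤ (∑ j, |(Tmat m a b)⁻¹ i j|) * 1 := by
      rintro ⟨f₀, hc, hs⟩
      refine lam_raw hab.le i fun x hx => ?_
      obtain ⟨C, hC⟩ := isCompact_Icc.exists_bound_of_continuousOn hc
      calc |f₀ x| ≤ supN (Set.Icc a b) f₀ :=
            abs_le_supN_of_bdd (fun w hw => (Real.norm_eq_abs _ ▸ hC w hw : |f₀ w| ≤ C)) hx
        _ ≤ 1 := hs
    have key : |lam m a b i g| ≤ Cbase m a b := by
      have h1 : |lam m a b i g| ≤
          ⨆ f₀ : {f : ℝ → ℝ // ContinuousOn f (Set.Icc a b) ∧ supN (Set.Icc a b) f ≤ 1},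
            |lam m a b i f₀.1| :=
        le_ciSup (f := fun f₀ : {f : ℝ → ℝ // ContinuousOn f (Set.Icc a b) ∧
              supN (Set.Icc a b) f ≤ 1} => |lam m a b i f₀.1|)
          ⟨(∑ j, |(Tmat m a b)⁻¹ i j|) * 1, by rintro _ ⟨f₀, rfl⟩; exact hbdd f₀⟩ ⟨g, hgc, hg1⟩
      refine h1.trans (le_ciSup (f := fun i : Fin (m+1) =>
        ⨆ f₀ : {f : ℝ → ℝ // ContinuousOn f (Set.Icc a b) ∧ supN (Set.Icc a b) f ≤ 1},
          |lam m a b i f₀.1|) (Finite.bddAbove_range _) i)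
    have hfg : lam m a b i f = M * lam m a b i g := by
      simp only [lam, Matrix.mulVec, dotProduct, hg, Finset.mul_sum]
      refine Finset.sum_congr rfl fun j _ => ?_
      field_simp
    rw [hfg, abs_mul, abs_of_pos hMpos, mul_comm]
    exact mul_le_mul_of_nonneg_right key hMpos.le

lemma sum_abs_Dq_le (hab : a < b) {mk mr : ℕ} {x : ℝ} (hx : x ∈ Set.Icc a b) :
    ∑ i : Fin (mk+1), |Dq mk mr a b i x| ≤ ((mk:ℝ)+1) * rowNorm (Esub mk mr a b)⁻¹ := by
  have hrow : ∀ l : Fin (mk+1), ∑ j, |(Esub mk mr a b)⁻¹ l j| ≤ rowNorm (Esub mk mr a b)⁻¹ :=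
    fun l => le_ciSup (f := fun i : Fin (mk+1) => ∑ j, |(Esub mk mr a b)⁻¹ i j|)
      (Finite.bddAbove_range _) l
  calc ∑ i : Fin (mk+1), |Dq mk mr a b i x|
      ≤ ∑ i : Fin (mk+1), ∑ l : Fin (mk+1), |(Esub mk mr a b)⁻¹ l i| := by
        refine Finset.sum_le_sum fun i _ => ?_
        calc |Dq mk mr a b i x|
            ≤ ∑ l : Fin (mk+1), |(Esub mk mr a b)⁻¹ l i * bern mk a b l x| :=
              Finset.abs_sum_le_sum_abs _ _
          _ ≤ ∑ l : Fin (mk+1), |(Esub mk mr a b)⁻¹ l i| := by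
              refine Finset.sum_le_sum fun l _ => ?_
              rw [abs_mul]
              have hbm := bern_mem_s11 hab (Nat.lt_succ_iff.mp l.2) hx
              calc |(Esub mk mr a b)⁻¹ l i| * |bern mk a b (l:ℕ) x|
                  ≤ |(Esub mk mr a b)⁻¹ l i| * 1 := by
                    refine mul_le_mul_of_nonneg_left ?_ (abs_nonneg _)
                    rw [abs_of_nonneg hbm.1]; exact hbm.2
                _ = _ := mul_one _
    _ = ∑ l : Fin (mk+1), ∑ i : Fin (mk+1), |(Esub mk mr a b)⁻¹ l i| := Finset.sum_comm
    _ ≤ ∑ _l : Fin (mk+1), rowNorm (Esub mk mr a b)⁻¹ := Finset.sum_le_sum fun l _ => hrow l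
    _ = ((mk:ℝ)+1) * rowNorm (Esub mk mr a b)⁻¹ := by
        rw [Finset.sum_const, Finset.card_univ, Fintype.card_fin, nsmul_eq_mul]
        push_cast; ring

lemma Pop_bound (hab : a < b) {mk mr : ℕ} {f : ℝ → ℝ} {M : ℝ}
    (hfc : ContinuousOn f (Set.Icc a b)) (hf : ∀ x ∈ Set.Icc a b, |f x| ≤ M)
    {x : ℝ} (hx : x ∈ Set.Icc a b) :
    |Pop mk mr a b f x| ≤ Cconst mk mr a b * M := by
  have hM : 0 ≤ M := (abs_nonneg (f a)).trans (hf a ⟨le_refl a, hab.le⟩)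
  have hC : 0 ≤ Cbase mr a b := Cbase_nonneg _ _ _
  calc |Pop mk mr a b f x|
      ≤ ∑ i : Fin (mk+1), |mu mk mr a b i f * Dq mk mr a b i x| :=
        Finset.abs_sum_le_sum_abs _ _
    _ ≤ ∑ i : Fin (mk+1), (Cbase mr a b * M) * |Dq mk mr a b i x| := by
        refine Finset.sum_le_sum fun i _ => ?_
        rw [abs_mul]
        exact mul_le_mul_of_nonneg_right (abs_lam_le_Cbase hab _ hfc hf) (abs_nonneg _)
    _ = (Cbase mr a b * M) * ∑ i : Fin (mk+1), |Dq mk mr a b i x| := by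
        rw [Finset.mul_sum]
    _ ≤ (Cbase mr a b * M) * (((mk:ℝ)+1) * rowNorm (Esub mk mr a b)⁻¹) :=
        mul_le_mul_of_nonneg_left (sum_abs_Dq_le hab hx) (mul_nonneg hC hM)
    _ = Cconst mk mr a b * M := by rw [Cconst]; ring

lemma Pop_param_cont {c d : ℝ} (hcd : c ≤ d) {nl nr : ℕ} {F : ℝ × ℝ → ℝ}
    (hF : ContinuousOn F (Rect a b c d)) {y0 : ℝ} :
    ContinuousOn (fun x => Pop nl nr c d (fun y => F (x, y)) y0) (Set.Icc a b) := by
  simp only [Pop, mu, lam, Matrix.mulVec, dotProduct]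
  refine continuousOn_finset_sum _ fun i _ => ContinuousOn.mul ?_ continuousOn_const
  refine continuousOn_finset_sum _ fun j _ => ContinuousOn.mul continuousOn_const ?_
  refine hF.comp (continuousOn_id.prodMk continuousOn_const) fun x hx => ?_
  exact ⟨hx, node_mem hcd (Nat.lt_succ_iff.mp j.2)⟩

end helper2

/-- Boolean sum stability:
`‖(𝐏_{m_k} ⊕ 𝐐_{n_ℓ})F‖_∞ ≤ (C_{m_r,m_k} + C_{n_r,n_ℓ} + C_{m_r,m_k}·C_{n_r,n_ℓ})·‖F‖_∞`. -/
theorem stmt11 (a b c d : ℝ) (hab : a < b) (hcd : c < d) (r : ℕ) (m n : ℕ → ℕ)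
    (hm0 : 0 < m 0) (hn0 : 0 < n 0)
    (hmi : ∀ k < r, m k < m (k + 1)) (hni : ∀ k < r, n k < n (k + 1))
    (hmd : ∀ k < r, m k ∣ m (k + 1)) (hnd : ∀ k < r, n k ∣ n (k + 1)) :
    ∀ k ≤ r, ∀ l ≤ r, ∀ F : ℝ × ℝ → ℝ, ContinuousOn F (Rect a b c d) →
      supN (Rect a b c d)
          (fun z => PP (m k) (m r) a b F z + QQ (n l) (n r) c d F z -
            PP (m k) (m r) a b (QQ (n l) (n r) c d F) z) ≤
        (Cconst (m k) (m r) a b + Cconst (n l) (n r) c d +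
            Cconst (m k) (m r) a b * Cconst (n l) (n r) c d) *
          supN (Rect a b c d) F := by
  intro k hk l hl F hF
  set C1 := Cconst (m k) (m r) a b with hC1def
  set C2 := Cconst (n l) (n r) c d with hC2def
  set s := supN (Rect a b c d) F with hsdef
  have hcompact : IsCompact (Rect a b c d) := isCompact_Icc.prod isCompact_Icc
  obtain ⟨C, hC⟩ := hcompact.exists_bound_of_continuousOn hF
  have hFs : ∀ z ∈ Rect a b c d, |F z| ≤ s := fun z hz =>
    abs_le_supN_of_bdd (fun w hw => (Real.norm_eq_abs _ ▸ hC w hw : |F w| ≤ C)) hz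
  have hs0 : 0 ≤ s := Real.iSup_nonneg fun z => abs_nonneg _
  have hC1p : 0 ≤ C1 := Cconst_nonneg _ _ _ _
  have hC2p : 0 ≤ C2 := Cconst_nonneg _ _ _ _
  have hRHS : 0 ≤ (C1 + C2 + C1 * C2) * s := by positivity
  refine Real.iSup_le (fun z => ?_) hRHS
  obtain ⟨z, hz⟩ := z
  have hz1 : z.1 ∈ Set.Icc a b := hz.1
  have hz2 : z.2 ∈ Set.Icc c d := hz.2
  -- slice continuity
  have hslice1 : ContinuousOn (fun x => F (x, z.2)) (Set.Icc a b) :=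
    hF.comp (continuousOn_id.prodMk continuousOn_const) fun x hx => ⟨hx, hz2⟩
  have hP : |PP (m k) (m r) a b F z| ≤ C1 * s :=
    Pop_bound hab hslice1 (fun x hx => hFs (x, z.2) ⟨hx, hz2⟩) hz1
  have hQpt : ∀ w ∈ Rect a b c d, |QQ (n l) (n r) c d F w| ≤ C2 * s := by
    intro w hw
    have hslice2 : ContinuousOn (fun y => F (w.1, y)) (Set.Icc c d) :=
      hF.comp (continuousOn_const.prodMk continuousOn_id) fun y hy => ⟨hw.1, hy⟩
    exact Pop_bound hcd hslice2 (fun y hy => hFs (w.1, y) ⟨hw.1, hy⟩) hw.2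
  have hQ : |QQ (n l) (n r) c d F z| ≤ C2 * s := hQpt z hz
  have hPQ : |PP (m k) (m r) a b (QQ (n l) (n r) c d F) z| ≤ C1 * (C2 * s) := by
    refine Pop_bound hab (Pop_param_cont hcd.le hF) (fun x hx => ?_) hz1
    exact hQpt (x, z.2) ⟨hx, hz2⟩
  beta_reduce
  rw [abs_le] at hP hQ hPQ ⊢
  have hexp : (C1 + C2 + C1 * C2) * s = C1 * s + C2 * s + C1 * (C2 * s) := by ring
  constructor
  · rw [hexp]; linarith [hP.1, hQ.1, hPQ.2]
  · rw [hexp]; linarith [hP.2, hQ.2, hPQ.1]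
end
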